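/- Let L = M(G,2) where G is a group not isomorphic to M(H,2) for any group H. Then Aut(L) ≅ G ⋊ Aut(G), where G acts by left translation on the coset Gu (g·(g₁u) = (gg₁)u, fixing G pointwise) and Aut(G) extends naturally to L by ψ(gu) = ψ(g)u. -/

import Mathlib

/-- The Chein loop `M(G,2) = G ⊎ Gu`, realized on `G ⊕ G` where `Sum.inl g = g`
and `Sum.inr g = g·u`, with multiplication extending that of `G` and satisfying
(c1) `g₁(g₂u) = (g₂g₁)u`, (c2) `(g₁u)g₂ = (g₁g₂⁻¹)u`, (c3) `(g₁u)(g₂u) = g₂⁻¹g₁`. -/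
instance cheinMul (G : Type*) [Group G] : Mul (G ⊕ G) :=
  ⟨fun x y =>
    match x, y with
    | .inl a, .inl b => .inl (a * b)
    | .inl a, .inr b => .inr (b * a)
    | .inr a, .inl b => .inr (a * b⁻¹)
    | .inr a, .inr b => .inl (b⁻¹ * a)⟩


instance cheinOne (G : Type*) [Group G] : One (G ⊕ G) := ⟨Sum.inl 1⟩

namespace CheinAux

variable {G : Type*} [Group G]

@[simp] lemma inl_mul_inl (a b : G) : (Sum.inl a * Sum.inl b : G ⊕ G) = Sum.inl (a * b) := rfl
@[simp] lemma inl_mul_inr (a b : G) : (Sum.inl a * Sum.inr b : G ⊕ G) = Sum.inr (b * a) := rfl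
@[simp] lemma inr_mul_inl (a b : G) : (Sum.inr a * Sum.inl b : G ⊕ G) = Sum.inr (a * b⁻¹) := rfl
@[simp] lemma inr_mul_inr (a b : G) : (Sum.inr a * Sum.inr b : G ⊕ G) = Sum.inl (b⁻¹ * a) := rfl
@[simp] lemma one_def : (1 : G ⊕ G) = Sum.inl 1 := rfl

lemma map_one' (φ : (G ⊕ G) ≃* (G ⊕ G)) : φ 1 = 1 := by
  have h1 : φ 1 * φ 1 = φ 1 := by rw [← map_mul, show (1 : G ⊕ G) * 1 = 1 by simp]
  rcases hx : φ 1 with a | a <;> rw [hx] at h1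
  · simp only [inl_mul_inl, Sum.inl.injEq] at h1
    simp [one_def, mul_eq_left.mp h1]
  · simp only [inr_mul_inr] at h1
    exact absurd h1 (by simp)

/-- The automorphism of the Chein loop given by `ψ` on `G` and `x·u ↦ (g·ψ(x))·u`. -/
def cheinTrans (g : G) (ψ : MulAut G) : MulAut (G ⊕ G) where
  toFun x := match x with
    | .inl a => .inl (ψ a)
    | .inr a => .inr (g * ψ a)
  invFun x := match x with
    | .inl a => .inl (ψ.symm a)
    | .inr a => .inr (ψ.symm (g⁻¹ * a))
  left_inv := by rintro (a | a) <;> simp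
  right_inv := by rintro (a | a) <;> simp
  map_mul' := by rintro (a | a) (b | b) <;> simp [mul_assoc]

@[simp] lemma cheinTrans_inl (g : G) (ψ : MulAut G) (a : G) :
    cheinTrans g ψ (Sum.inl a) = Sum.inl (ψ a) := rfl

@[simp] lemma cheinTrans_inr (g : G) (ψ : MulAut G) (a : G) :
    cheinTrans g ψ (Sum.inr a) = Sum.inr (g * ψ a) := rfl

/-- The homomorphism from the semidirect product into `Aut(M(G,2))`. -/
def cheinHom : SemidirectProduct G (MulAut G) (MonoidHom.id (MulAut G)) →* MulAut (G ⊕ G) where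
  toFun p := cheinTrans p.left p.right
  map_one' := by ext x; rcases x with a | a <;> simp
  map_mul' p q := by
    ext x
    rcases x with a | a <;>
      simp [MulAut.mul_apply, mul_assoc]

end CheinAux

open scoped Classical in
/-- Reading map from a mixed subloop `H ∪ (aH)u` of the Chein loop to `M(H,2)`. -/
noncomputable def CheinAux.rho {G : Type*} [Group G] (Hs : Subgroup G) (a : G) :
    G ⊕ G → (↥Hs ⊕ ↥Hs)
  | .inl g => .inl (if hg : g ∈ Hs then ⟨g, hg⟩ else 1)
  | .inr y => .inr (if hy : a⁻¹ * y ∈ Hs then ⟨a⁻¹ * y, hy⟩ else 1)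

namespace CheinAux

variable {G : Type*} [Group G]

lemma rho_inl {Hs : Subgroup G} {a : G} (g : G) (hg : g ∈ Hs) :
    rho Hs a (Sum.inl g) = Sum.inl ⟨g, hg⟩ := by simp [rho, hg]

lemma rho_inr {Hs : Subgroup G} {a : G} (y : G) (hy : a⁻¹ * y ∈ Hs) :
    rho Hs a (Sum.inr y) = Sum.inr ⟨a⁻¹ * y, hy⟩ := by simp [rho, hy]

end CheinAux

/-- Theorem 3.4: let `L = M(G,2)` (realized on `G ⊕ G`) where `G` is not isomorphic
to `M(H,2)` for any group `H`. Then `Aut(L) ≅ G ⋊ Aut(G)`, where `G` acts by left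
translation on the coset `Gu` (`g·(g₁u) = (gg₁)u`, fixing `G` pointwise) and
`Aut(G)` extends naturally to `L` by `ψ(gu) = ψ(g)u`. -/
theorem aut_chein_eq_semidirect
    (G : Type) [Group G] [Finite G]
    (h : ∀ (H : Type) [Group H], IsEmpty (G ≃* (H ⊕ H))) :
    ∃ Φ : SemidirectProduct G (MulAut G) (MonoidHom.id (MulAut G)) ≃* MulAut (G ⊕ G),
      (∀ g g₁ : G,
        (Φ ⟨g, 1⟩) (Sum.inl g₁) = Sum.inl g₁ ∧
        (Φ ⟨g, 1⟩) (Sum.inr g₁) = Sum.inr (g * g₁)) ∧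
      (∀ (ψ : MulAut G) (g₁ : G),
        (Φ ⟨1, ψ⟩) (Sum.inl g₁) = Sum.inl (ψ g₁) ∧
        (Φ ⟨1, ψ⟩) (Sum.inr g₁) = Sum.inr (ψ g₁)) := by
  classical
  open CheinAux in
  have inj : Function.Injective (CheinAux.cheinHom (G := G)) := by
    intro p q hpq
    have h1 : ∀ x, (CheinAux.cheinHom p) x = (CheinAux.cheinHom q) x := fun x => by rw [hpq]
    have hl : p.left = q.left := by
      have := h1 (Sum.inr 1)
      simpa [CheinAux.cheinHom] using this
    have hr : p.right = q.right := by
      apply MulEquiv.ext; intro x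
      have := h1 (Sum.inl x)
      simpa [CheinAux.cheinHom] using this
    rcases p with ⟨pl, pr⟩; rcases q with ⟨ql, qr⟩
    simp_all
  have surj : Function.Surjective (CheinAux.cheinHom (G := G)) := by
    intro φ
    by_cases hcc : ∃ a b, φ (Sum.inr a) = Sum.inl b
    · exfalso
      obtain ⟨a, b, hab⟩ := hcc
      set Hs : Subgroup G :=
        { carrier := {g | ∃ c, φ (Sum.inl g) = Sum.inl c}
          one_mem' := ⟨1, by rw [← CheinAux.one_def]; exact CheinAux.map_one' φ⟩
          mul_mem' := by
            rintro g₁ g₂ ⟨c₁, hc₁⟩ ⟨c₂, hc₂⟩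
            exact ⟨c₁ * c₂, by
              rw [← CheinAux.inl_mul_inl, map_mul, hc₁, hc₂, CheinAux.inl_mul_inl]⟩
          inv_mem' := by
            rintro g ⟨c, hcg⟩
            rcases hd : φ (Sum.inl g⁻¹) with d | d
            · exact ⟨d, hd⟩
            · exfalso
              have hcon : φ (Sum.inl g * Sum.inl g⁻¹) = Sum.inr (d * c) := by
                rw [map_mul, hcg, hd, CheinAux.inl_mul_inr]
              rw [CheinAux.inl_mul_inl, mul_inv_cancel, ← CheinAux.one_def,
                CheinAux.map_one' φ, CheinAux.one_def] at hcon
              exact absurd hcon (by simp) } with hHsdef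
      have memHs : ∀ g : G, g ∈ Hs ↔ ∃ c, φ (Sum.inl g) = Sum.inl c := fun g => Iff.rfl
      have mem_inl : ∀ g c : G, φ (Sum.inl g) = Sum.inl c → g ∈ Hs := fun g c hg => ⟨c, hg⟩
      have mem_inr : ∀ y g : G, φ (Sum.inr y) = Sum.inl g → a⁻¹ * y ∈ Hs := by
        intro y g hy
        refine ⟨g * b, ?_⟩
        rw [show (Sum.inl (a⁻¹ * y) : G ⊕ G) = Sum.inr y * Sum.inr a from
          (CheinAux.inr_mul_inr y a).symm, map_mul, hy, hab, CheinAux.inl_mul_inl]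
      have mulρ : ∀ (x y : G ⊕ G) (gx gy : G), φ x = Sum.inl gx → φ y = Sum.inl gy →
          CheinAux.rho Hs a (x * y) = CheinAux.rho Hs a x * CheinAux.rho Hs a y := by
        intro x y gx gy hx hy
        have hxy : φ (x * y) = Sum.inl (gx * gy) := by
          rw [map_mul, hx, hy, CheinAux.inl_mul_inl]
        rcases x with p | p <;> rcases y with q | q
        · rw [CheinAux.inl_mul_inl] at hxy ⊢
          rw [CheinAux.rho_inl _ (mem_inl _ _ hxy), CheinAux.rho_inl _ (mem_inl _ _ hx),
            CheinAux.rho_inl _ (mem_inl _ _ hy), CheinAux.inl_mul_inl]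
          exact congrArg Sum.inl (Subtype.ext rfl)
        · rw [CheinAux.inl_mul_inr] at hxy ⊢
          rw [CheinAux.rho_inr _ (mem_inr _ _ hxy), CheinAux.rho_inl _ (mem_inl _ _ hx),
            CheinAux.rho_inr _ (mem_inr _ _ hy), CheinAux.inl_mul_inr]
          exact congrArg Sum.inr (Subtype.ext (by simp [mul_assoc]))
        · rw [CheinAux.inr_mul_inl] at hxy ⊢
          rw [CheinAux.rho_inr _ (mem_inr _ _ hxy), CheinAux.rho_inr _ (mem_inr _ _ hx),
            CheinAux.rho_inl _ (mem_inl _ _ hy), CheinAux.inr_mul_inl]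
          exact congrArg Sum.inr (Subtype.ext (by simp [mul_assoc]))
        · rw [CheinAux.inr_mul_inr] at hxy ⊢
          rw [CheinAux.rho_inl _ (mem_inl _ _ hxy), CheinAux.rho_inr _ (mem_inr _ _ hx),
            CheinAux.rho_inr _ (mem_inr _ _ hy), CheinAux.inr_mul_inr]
          exact congrArg Sum.inl (Subtype.ext (by simp [mul_assoc]))
      set e : G → (↥Hs ⊕ ↥Hs) := fun g => CheinAux.rho Hs a (φ.symm (Sum.inl g)) with he
      have hsymm : ∀ g : G, φ (φ.symm (Sum.inl g)) = Sum.inl g := fun g => φ.apply_symm_apply _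
      have emul : ∀ g₁ g₂ : G, e (g₁ * g₂) = e g₁ * e g₂ := by
        intro g₁ g₂
        have hs : φ.symm (Sum.inl (g₁ * g₂)) = φ.symm (Sum.inl g₁) * φ.symm (Sum.inl g₂) := by
          rw [← CheinAux.inl_mul_inl, map_mul]
        simp only [he]
        rw [hs]
        exact mulρ _ _ _ _ (hsymm g₁) (hsymm g₂)
      have einj : Function.Injective e := by
        intro g₁ g₂ hg
        have h₁ := hsymm g₁; have h₂ := hsymm g₂
        simp only [he] at hg
        rcases hx1 : φ.symm (Sum.inl g₁) with p | p <;>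
          rcases hx2 : φ.symm (Sum.inl g₂) with q | q <;>
          rw [hx1] at hg h₁ <;> rw [hx2] at hg h₂
        · rw [CheinAux.rho_inl _ (mem_inl _ _ h₁), CheinAux.rho_inl _ (mem_inl _ _ h₂)] at hg
          obtain rfl : p = q := by simpa [Subtype.ext_iff] using hg
          exact Sum.inl.inj (h₁.symm.trans h₂)
        · simp [CheinAux.rho] at hg
        · simp [CheinAux.rho] at hg
        · rw [CheinAux.rho_inr _ (mem_inr _ _ h₁), CheinAux.rho_inr _ (mem_inr _ _ h₂)] at hg
          obtain rfl : p = q := by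
            have := (Sum.inr.inj hg)
            have := Subtype.ext_iff.mp this
            exact mul_left_cancel this
          exact Sum.inl.inj (h₁.symm.trans h₂)
      have esurj : Function.Surjective e := by
        rintro (⟨x, hx⟩ | ⟨x, hx⟩)
        · obtain ⟨c, hcop⟩ := (memHs x).mp hx
          refine ⟨c, ?_⟩
          have hs : φ.symm (Sum.inl c) = Sum.inl x := by rw [← hcop, φ.symm_apply_apply]
          simp only [he]
          rw [hs, CheinAux.rho_inl _ hx]
        · obtain ⟨c, hcop⟩ := (memHs x).mp hx
          refine ⟨c * b, ?_⟩
          have h1 : φ (Sum.inr (a * x)) = Sum.inl (c * b) := by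
            rw [show (Sum.inr (a * x) : G ⊕ G) = Sum.inl x * Sum.inr a from
              (CheinAux.inl_mul_inr x a).symm, map_mul, hcop, hab, CheinAux.inl_mul_inl]
          have h2 : φ.symm (Sum.inl (c * b)) = Sum.inr (a * x) := by
            rw [← h1, φ.symm_apply_apply]
          have hmem' : a⁻¹ * (a * x) ∈ Hs := by rw [inv_mul_cancel_left]; exact hx
          simp only [he]
          rw [h2, CheinAux.rho_inr _ hmem']
          exact congrArg Sum.inr (Subtype.ext (inv_mul_cancel_left a x))
      exact (h ↥Hs).false ⟨Equiv.ofBijective e ⟨einj, esurj⟩, fun x y => emul x y⟩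
    · push_neg at hcc
      have hinr : ∀ x : G, ∃ y : G, φ (Sum.inr x) = Sum.inr y := by
        intro x
        rcases hx : φ (Sum.inr x) with y | y
        · exact absurd hx (hcc x y)
        · exact ⟨y, rfl⟩
      choose f hf using hinr
      have finj : Function.Injective f := by
        intro x₁ x₂ hx
        exact Sum.inr.inj (φ.injective (by rw [hf x₁, hf x₂, hx]))
      have fsurj : Function.Surjective f := Finite.surjective_of_injective finj
      have hinl : ∀ x : G, ∃ y : G, φ (Sum.inl x) = Sum.inl y := by
        intro x
        rcases hx : φ (Sum.inl x) with y | y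
        · exact ⟨y, rfl⟩
        · exfalso
          obtain ⟨x', hx'⟩ := fsurj y
          have := φ.injective (hx.trans (hx' ▸ (hf x').symm))
          simp at this
      choose ψ₀ hψ₀ using hinl
      have ψmul : ∀ x y : G, ψ₀ (x * y) = ψ₀ x * ψ₀ y := by
        intro x y
        have h2 : φ (Sum.inl (x * y)) = Sum.inl (ψ₀ x * ψ₀ y) := by
          rw [← CheinAux.inl_mul_inl, map_mul, hψ₀, hψ₀, CheinAux.inl_mul_inl]
        exact Sum.inl.inj ((hψ₀ (x * y)).symm.trans h2)
      have ψinj : Function.Injective ψ₀ := by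
        intro x y hxy
        exact Sum.inl.inj (φ.injective ((hψ₀ x).trans (by rw [hxy, ← hψ₀ y])))
      have ψsurj : Function.Surjective ψ₀ := Finite.surjective_of_injective ψinj
      refine ⟨⟨f 1, { Equiv.ofBijective ψ₀ ⟨ψinj, ψsurj⟩ with map_mul' := fun x y => ψmul x y }⟩, ?_⟩
      have hfp : ∀ p : G, f p = f 1 * ψ₀ p := by
        intro p
        have h1 : φ (Sum.inr p) = Sum.inr (f 1 * ψ₀ p) := by
          rw [show (Sum.inr p : G ⊕ G) = Sum.inl p * Sum.inr 1 from by simp, map_mul,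
            hψ₀, hf, CheinAux.inl_mul_inr]
        exact Sum.inr.inj ((hf p).symm.trans h1)
      ext x
      rcases x with p | p
      · show CheinAux.cheinTrans _ _ (Sum.inl p) = φ (Sum.inl p)
        rw [CheinAux.cheinTrans_inl, hψ₀ p]
        rfl
      · show CheinAux.cheinTrans _ _ (Sum.inr p) = φ (Sum.inr p)
        rw [CheinAux.cheinTrans_inr, hf p, hfp p]
        rfl
  refine ⟨MulEquiv.ofBijective CheinAux.cheinHom ⟨inj, surj⟩, ?_, ?_⟩
  · intro g g₁
    constructor
    · show CheinAux.cheinTrans g 1 (Sum.inl g₁) = _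
      simp
    · show CheinAux.cheinTrans g 1 (Sum.inr g₁) = _
      simp
  · intro ψ g₁
    constructor
    · show CheinAux.cheinTrans 1 ψ (Sum.inl g₁) = _
      simp
    · show CheinAux.cheinTrans 1 ψ (Sum.inr g₁) = _
      simp
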